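/- (Exact preintegration under accelerometer bias correction.) Let ω, a : ℝ → ℝ³ be continuous and c ∈ ℝ³. Let R : ℝ → ℝ³ˣ³ and V, X : ℝ → ℝ³ be differentiable with R_0 = I₃, V_0 = 0, X_0 = 0, dR_t/dt = R_t(ω_t)ₓ, dV_t/dt = R_t a_t, dX_t/dt = V_t, and let R̂, V̂, X̂ solve the same system with a replaced by a + c (same ω, same zero initial conditions). Then for all t: R̂_t = R_t, V̂_t = V_t + (∫₀ᵗ R_s ds) c, and X̂_t = X_t + (∫₀ᵗ (∫₀ˢ R_u du) ds) c. In particular, in the absence of a gyro bias correction, the preintegrated quantities depend affinely (hence exactly, with no first-order approximation) on the accelerometer bias correction c. -/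

import Mathlib

open Matrix

noncomputable section

abbrev M3 := Matrix (Fin 3) (Fin 3) ℝ
abbrev M5 := Matrix (Fin 5) (Fin 5) ℝ
abbrev V3 := Fin 3 → ℝ
abbrev V9 := V3 × V3 × V3

/-- Skew-symmetric cross-product matrix `(ω)ₓ`. -/
def skew (ω : V3) : M3 := !![0, -ω 2, ω 1; ω 2, 0, -ω 0; -ω 1, ω 0, 0]

/-- 5×5 block matrix `[[A, v, x],[0₁ₓ₃, d, 0],[0₁ₓ₃, 0, e]]`. -/
def blk (A : M3) (v x : V3) (d e : ℝ) : M5 :=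
  !![A 0 0, A 0 1, A 0 2, v 0, x 0;
     A 1 0, A 1 1, A 1 2, v 1, x 1;
     A 2 0, A 2 1, A 2 2, v 2, x 2;
     0, 0, 0, d, 0;
     0, 0, 0, 0, e]

/-- Element of `SE₂(3)` built from rotation `R`, velocity `V`, position `X`. -/
def se23 (R : M3) (V X : V3) : M5 := blk R V X 1 1

/-- The hat map `ξ^∧` of `ξ = (ω, v, x) ∈ ℝ⁹`. -/
def hat (ω v x : V3) : M5 := blk (skew ω) v x 0 0

def hat9 (ξ : V9) : M5 := hat ξ.1 ξ.2.1 ξ.2.2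

def IsSO3 (R : M3) : Prop := Rᵀ * R = 1 ∧ R.det = 1

def IsSE23 (T : M5) : Prop := ∃ R V X, IsSO3 R ∧ T = se23 R V X

/-- Rotation block of a 5×5 matrix. -/
def Rof (T : M5) : M3 := Matrix.of fun i j => T (Fin.castLE (by omega) i) (Fin.castLE (by omega) j)

/-- Velocity column of a 5×5 matrix. -/
def Vof (T : M5) : V3 := fun i => T (Fin.castLE (by omega) i) 3

/-- Position column of a 5×5 matrix. -/
def Xof (T : M5) : V3 := fun i => T (Fin.castLE (by omega) i) 4

/-- Adjoint of `T ∈ SE₂(3)` acting on `ξ = (ω, v, x) ∈ ℝ⁹`: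
  `[[R, 0, 0],[(V)ₓR, R, 0],[(X)ₓR, 0, R]]`. -/
def Ad (T : M5) (ξ : V9) : V9 :=
  (Rof T *ᵥ ξ.1,
   (skew (Vof T) * Rof T) *ᵥ ξ.1 + Rof T *ᵥ ξ.2.1,
   (skew (Xof T) * Rof T) *ᵥ ξ.1 + Rof T *ᵥ ξ.2.2)

/-- `f(T)` : places the velocity column of `T` in the position column. -/
def fmap (T : M5) : M5 := blk 0 0 (Vof T) 0 0

/-- `Φ_t` : maps `[[R,V,X],...]` to `[[R,V,X+tV],...]` (acting on the top three rows). -/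
def Phi (t : ℝ) (T : M5) : M5 :=
  Matrix.of fun i j => if (i : ℕ) < 3 ∧ (j : ℕ) = 4 then T i j + t * T i 3 else T i j

/-- The linear map `F : (ω,v,x) ↦ (ω, v, x + Δt·v)`. -/
def Fmap (Δt : ℝ) (ξ : V9) : V9 := (ξ.1, ξ.2.1, ξ.2.2 + Δt • ξ.2.1)

attribute [local instance] Matrix.normedAddCommGroup Matrix.normedSpace

lemma norm_mul_le3 (A B : M3) : ‖A * B‖ ≤ 3 * ‖A‖ * ‖B‖ := by
  rw [Matrix.norm_le_iff (by positivity)]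
  intro i j
  rw [Matrix.mul_apply]
  calc ‖∑ k, A i k * B k j‖ ≤ ∑ k, ‖A i k * B k j‖ := norm_sum_le _ _
    _ ≤ ∑ _k : Fin 3, ‖A‖ * ‖B‖ := by
        refine Finset.sum_le_sum fun k _ => ?_
        rw [norm_mul]
        exact mul_le_mul (Matrix.norm_entry_le_entrywise_sup_norm A)
          (Matrix.norm_entry_le_entrywise_sup_norm B) (norm_nonneg _) (norm_nonneg _)
    _ = 3 * ‖A‖ * ‖B‖ := by simp [mul_assoc]

lemma abs_entry_le (v : V3) (i : Fin 3) : |v i| ≤ ‖v‖ := by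
  rw [← Real.norm_eq_abs]; exact norm_le_pi_norm v i

lemma norm_skew_le (v : V3) : ‖skew v‖ ≤ ‖v‖ := by
  rw [Matrix.norm_le_iff (norm_nonneg v)]
  intro i j
  fin_cases i <;> fin_cases j <;>
    simp [skew] <;>
    first
      | positivity
      | exact abs_entry_le v _

/-- `M ↦ M *ᵥ c` as a continuous linear map. -/
def mvL (c : V3) : M3 →L[ℝ] V3 :=
  LinearMap.toContinuousLinearMap
    { toFun := fun M => M *ᵥ c
      map_add' := fun A B => Matrix.add_mulVec A B c
      map_smul' := fun r A => by simp [Matrix.smul_mulVec] }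

@[simp] lemma mvL_apply (c : V3) (M : M3) : mvL c M = M *ᵥ c := rfl


/-- exact preintegration under accelerometer bias correction:
with the same gyro inputs, shifting the accelerometer input by a constant `c`
shifts the preintegrated quantities affinely in `c`, with no approximation. -/
theorem stmt_17 (ω a : ℝ → V3) (hω : Continuous ω) (ha : Continuous a) (c : V3)
    (R : ℝ → M3) (V X : ℝ → V3)
    (hR0 : R 0 = 1) (hV0 : V 0 = 0) (hX0 : X 0 = 0)
    (hRd : ∀ t, HasDerivAt R (R t * skew (ω t)) t)
    (hVd : ∀ t, HasDerivAt V (R t *ᵥ a t) t)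
    (hXd : ∀ t, HasDerivAt X (V t) t)
    (R' : ℝ → M3) (V' X' : ℝ → V3)
    (hR0' : R' 0 = 1) (hV0' : V' 0 = 0) (hX0' : X' 0 = 0)
    (hRd' : ∀ t, HasDerivAt R' (R' t * skew (ω t)) t)
    (hVd' : ∀ t, HasDerivAt V' (R' t *ᵥ (a t + c)) t)
    (hXd' : ∀ t, HasDerivAt X' (V' t) t) :
    ∀ t, R' t = R t ∧
      V' t = V t + (∫ s in (0:ℝ)..t, R s) *ᵥ c ∧
      X' t = X t + (∫ s in (0:ℝ)..t, (∫ u in (0:ℝ)..s, R u)) *ᵥ c := by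
  -- Step 1: R' = R by uniqueness of the linear ODE
  have hRc : Continuous R := Differentiable.continuous (fun t => (hRd t).differentiableAt)
  have hRc' : Continuous R' :=
    Differentiable.continuous (fun t => (hRd' t).differentiableAt)
  have hRR : ∀ t, R' t = R t := by
    intro T
    set b : ℝ := |T| + 1 with hb
    have hTmem : T ∈ Set.Icc (-b) b := by
      constructor
      · nlinarith [abs_nonneg T, neg_abs_le T]
      · nlinarith [le_abs_self T]
    have h0 : (0:ℝ) ∈ Set.Ioo (-b) b := by
      constructor <;> nlinarith [abs_nonneg T]
    obtain ⟨C, hC⟩ := (isCompact_Icc (a := -b) (b := b)).exists_bound_of_continuousOn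
      hω.continuousOn
    set K : NNReal := Real.toNNReal (3 * C) with hK
    set v : ℝ → M3 → M3 := fun t M => M * skew (ω t) with hv_def
    set s : ℝ → Set M3 := fun t => if t ∈ Set.Icc (-b) b then Set.univ else ∅ with hs_def
    have hv : ∀ t, LipschitzOnWith K (v t) (s t) := by
      intro t
      by_cases ht : t ∈ Set.Icc (-b) b
      · have hlip : LipschitzWith K (v t) := by
          apply LipschitzWith.of_dist_le_mul
          intro M₁ M₂
          rw [dist_eq_norm, dist_eq_norm, hv_def]
          simp only
          rw [← sub_mul]
          calc ‖(M₁ - M₂) * skew (ω t)‖ ≤ 3 * ‖M₁ - M₂‖ * ‖skew (ω t)‖ := norm_mul_le3 _ _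
            _ ≤ 3 * ‖M₁ - M₂‖ * ‖ω t‖ := by
                have := norm_skew_le (ω t)
                have h3 : (0:ℝ) ≤ 3 * ‖M₁ - M₂‖ := by positivity
                nlinarith
            _ ≤ 3 * ‖M₁ - M₂‖ * C := by
                have := hC t ht
                have h3 : (0:ℝ) ≤ 3 * ‖M₁ - M₂‖ := by positivity
                nlinarith
            _ ≤ (K : ℝ) * ‖M₁ - M₂‖ := by
                rw [hK]
                have : (3 * C) ≤ ((Real.toNNReal (3 * C) : NNReal) : ℝ) :=
                  Real.le_coe_toNNReal _
                nlinarith [norm_nonneg (M₁ - M₂)]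
        obtain ⟨h1, h2⟩ := ht
        simpa [hs_def, h1, h2] using hlip.lipschitzOnWith (s := Set.univ)
      · simp only [hs_def, ht, if_false]
        exact lipschitzOnWith_empty K _
    have key : Set.EqOn R' R (Set.Icc (-b) b) := by
      apply ODE_solution_unique_of_mem_Icc (v := v) (s := s) (fun t _ => hv t) h0
        hRc'.continuousOn (fun t _ => hRd' t)
        (fun t ht => by simp [hs_def, ht.1.le, ht.2.le])
        hRc.continuousOn (fun t _ => hRd t)
        (fun t ht => by simp [hs_def, ht.1.le, ht.2.le])
      rw [hR0, hR0']
    exact key hTmem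
  -- Primitives
  set P : ℝ → M3 := fun t => ∫ s in (0:ℝ)..t, R s with hP_def
  have hPd : ∀ t, HasDerivAt P (R t) t :=
    fun t => (hRc.integral_hasStrictDerivAt 0 t).hasDerivAt
  have hPc : Continuous P := Differentiable.continuous (fun t => (hPd t).differentiableAt)
  set Q : ℝ → M3 := fun t => ∫ s in (0:ℝ)..t, P s with hQ_def
  have hQd : ∀ t, HasDerivAt Q (P t) t :=
    fun t => (hPc.integral_hasStrictDerivAt 0 t).hasDerivAt
  have hP0 : P 0 = 0 := intervalIntegral.integral_same
  have hQ0 : Q 0 = 0 := intervalIntegral.integral_same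
  -- Step 2: V' = V + P *ᵥ c
  have hgd : ∀ t, HasDerivAt (fun t => V' t - V t - mvL c (P t)) 0 t := by
    intro t
    have h1 := hVd' t
    rw [hRR t, Matrix.mulVec_add] at h1
    have h2 : HasDerivAt (fun t => mvL c (P t)) (mvL c (R t)) t :=
      (mvL c).hasFDerivAt.comp_hasDerivAt t (hPd t)
    have h3 := (h1.sub (hVd t)).sub h2
    refine h3.congr_deriv ?_
    simp only [mvL_apply]
    abel
  have hVeq : ∀ t, V' t = V t + P t *ᵥ c := by
    intro t
    have hconst := is_const_of_deriv_eq_zero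
      (fun x => (hgd x).differentiableAt) (fun x => (hgd x).deriv) t 0
    simp only [hV0, hV0', hP0, map_zero, sub_zero, sub_self] at hconst
    have : V' t - V t - mvL c (P t) = 0 := hconst
    simp only [mvL_apply] at this
    have := sub_eq_zero.mp (by rwa [sub_sub] at this)
    linear_combination (norm := module) this
  -- Step 3: X' = X + Q *ᵥ c
  have hhd : ∀ t, HasDerivAt (fun t => X' t - X t - mvL c (Q t)) 0 t := by
    intro t
    have h2 : HasDerivAt (fun t => mvL c (Q t)) (mvL c (P t)) t :=
      (mvL c).hasFDerivAt.comp_hasDerivAt t (hQd t)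
    have h3 := ((hXd' t).sub (hXd t)).sub h2
    refine h3.congr_deriv ?_
    rw [hVeq t]
    simp only [mvL_apply]
    abel
  have hXeq : ∀ t, X' t = X t + Q t *ᵥ c := by
    intro t
    have hconst := is_const_of_deriv_eq_zero
      (fun x => (hhd x).differentiableAt) (fun x => (hhd x).deriv) t 0
    simp only [hX0, hX0', hQ0, map_zero, sub_zero, sub_self] at hconst
    have : X' t - X t - mvL c (Q t) = 0 := hconst
    simp only [mvL_apply] at this
    have := sub_eq_zero.mp (by rwa [sub_sub] at this)
    linear_combination (norm := module) this
  intro t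
  exact ⟨hRR t, hVeq t, hXeq t⟩
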